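/- If Φ : G → 𝒜 is a letter-quasimorphism, then the associated map Φ̃ : G → 𝒜, defined by Φ̃(g) := (Φ(g))~, is a well-behaved letter-quasimorphism. -/

import Mathlib

open FreeGroup

abbrev W : Type := FreeGroup (Fin 2)

/-- The set of alternating words: reduced words whose letters alternate
between the two generators `a` (index 0) and `b` (index 1). -/
def Alt : Set W := {w | List.Chain' (fun p q : Fin 2 × Bool => p.1 ≠ q.1) w.toWord}

/-- A letter-quasimorphism `Φ : G → 𝒜`. -/
def IsLetterQM {G : Type*} [Group G] (Φ : G → W) : Prop :=
  (∀ g, Φ g ∈ Alt) ∧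
  (∀ g : G, Φ g⁻¹ = (Φ g)⁻¹) ∧
  (∀ g h : G,
    Φ g * Φ h * (Φ (g * h))⁻¹ = 1 ∨
    ∃ (i : Fin 2) (s₁ s₂ s₃ : Bool) (c₁ c₂ c₃ : W),
      c₁ ∈ Alt ∧ c₂ ∈ Alt ∧ c₃ ∈ Alt ∧
      ¬(s₁ = s₂ ∧ s₂ = s₃) ∧
      (Φ g).toWord = (c₁⁻¹).toWord ++ [(i, s₁)] ++ c₂.toWord ∧
      (Φ h).toWord = (c₂⁻¹).toWord ++ [(i, s₂)] ++ c₃.toWord ∧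
      ((Φ (g * h))⁻¹).toWord = (c₃⁻¹).toWord ++ [(i, s₃)] ++ c₁.toWord)

/-- The automorphism `φ_a : a ↦ a⁻¹, b ↦ b` of `F₂`. -/
def phiaF : W →* W :=
  FreeGroup.lift (fun i : Fin 2 => if i = 0 then (FreeGroup.of (0 : Fin 2))⁻¹ else FreeGroup.of 1)

/-- The automorphism `φ_b : a ↦ a, b ↦ b⁻¹` of `F₂`. -/
def phibF : W →* W :=
  FreeGroup.lift (fun i : Fin 2 => if i = 0 then FreeGroup.of 0 else (FreeGroup.of (1 : Fin 2))⁻¹)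

/-- Generating moves for the equivalence relation `∼` on triples:
rotation, inversion, and the sign-change automorphisms `φ_a`, `φ_b`. -/
def TripleBase : W × W × W → W × W × W → Prop := fun t t' =>
  t' = (t.2.1, t.2.2, t.1) ∨
  t' = ((t.2.2)⁻¹, (t.2.1)⁻¹, (t.1)⁻¹) ∨
  t' = (phiaF t.1, phiaF t.2.1, phiaF t.2.2) ∨
  t' = (phibF t.1, phibF t.2.1, phibF t.2.2)

/-- The equivalence relation `∼` on triples of elements of `F₂`. -/
def TripleEquiv : W × W × W → W × W × W → Prop := Relation.EqvGen TripleBase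

/-- Form [T1a]: `(c₁⁻¹ a b c₂, c₂⁻¹ b⁻¹ a c₃, c₃⁻¹ a⁻¹ c₁)`, all words reduced. -/
def FormT1a (y₁ y₂ y₃ : W) : Prop :=
  ∃ c₁ c₂ c₃ : W, c₁ ∈ Alt ∧ c₂ ∈ Alt ∧ c₃ ∈ Alt ∧
    y₁.toWord = (c₁⁻¹).toWord ++ [((0 : Fin 2), true), ((1 : Fin 2), true)] ++ c₂.toWord ∧
    y₂.toWord = (c₂⁻¹).toWord ++ [((1 : Fin 2), false), ((0 : Fin 2), true)] ++ c₃.toWord ∧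
    y₃.toWord = (c₃⁻¹).toWord ++ [((0 : Fin 2), false)] ++ c₁.toWord

/-- Form [T1b]: `(c₁⁻¹ b a c₂, c₂⁻¹ a⁻¹ b c₃, c₃⁻¹ b⁻¹ c₁)`, all words reduced. -/
def FormT1b (y₁ y₂ y₃ : W) : Prop :=
  ∃ c₁ c₂ c₃ : W, c₁ ∈ Alt ∧ c₂ ∈ Alt ∧ c₃ ∈ Alt ∧
    y₁.toWord = (c₁⁻¹).toWord ++ [((1 : Fin 2), true), ((0 : Fin 2), true)] ++ c₂.toWord ∧
    y₂.toWord = (c₂⁻¹).toWord ++ [((0 : Fin 2), false), ((1 : Fin 2), true)] ++ c₃.toWord ∧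
    y₃.toWord = (c₃⁻¹).toWord ++ [((1 : Fin 2), false)] ++ c₁.toWord

/-- Form [T2a]: `(c₁⁻¹ b⁻¹ a b c₂, c₂⁻¹ b⁻¹, b c₁)`, all words reduced. -/
def FormT2a (y₁ y₂ y₃ : W) : Prop :=
  ∃ c₁ c₂ : W, c₁ ∈ Alt ∧ c₂ ∈ Alt ∧
    y₁.toWord = (c₁⁻¹).toWord ++
      [((1 : Fin 2), false), ((0 : Fin 2), true), ((1 : Fin 2), true)] ++ c₂.toWord ∧
    y₂.toWord = (c₂⁻¹).toWord ++ [((1 : Fin 2), false)] ∧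
    y₃.toWord = [((1 : Fin 2), true)] ++ c₁.toWord

/-- Form [T2b]: `(c₁⁻¹ a⁻¹ b a c₂, c₂⁻¹ a⁻¹, a c₁)`, all words reduced. -/
def FormT2b (y₁ y₂ y₃ : W) : Prop :=
  ∃ c₁ c₂ : W, c₁ ∈ Alt ∧ c₂ ∈ Alt ∧
    y₁.toWord = (c₁⁻¹).toWord ++
      [((0 : Fin 2), false), ((1 : Fin 2), true), ((0 : Fin 2), true)] ++ c₂.toWord ∧
    y₂.toWord = (c₂⁻¹).toWord ++ [((0 : Fin 2), false)] ∧
    y₃.toWord = [((0 : Fin 2), true)] ++ c₁.toWord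

/-- A triple of alternating words is letter-thin if it is `∼`-equivalent to a triple
of one of the forms [T1a], [T1b], [T2a], [T2b]. -/
def LetterThin (x₁ x₂ x₃ : W) : Prop :=
  x₁ ∈ Alt ∧ x₂ ∈ Alt ∧ x₃ ∈ Alt ∧
  ∃ y₁ y₂ y₃ : W, TripleEquiv (x₁, x₂, x₃) (y₁, y₂, y₃) ∧
    (FormT1a y₁ y₂ y₃ ∨ FormT1b y₁ y₂ y₃ ∨ FormT2a y₁ y₂ y₃ ∨ FormT2b y₁ y₂ y₃)

/-- A degenerate triple: one `∼`-equivalent to `(w, w⁻¹, e)`. -/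
def Degenerate (x₁ x₂ x₃ : W) : Prop :=
  ∃ u : W, TripleEquiv (x₁, x₂, x₃) (u, u⁻¹, 1)

/-- A well-behaved letter-quasimorphism `Ψ : G → 𝒜`: alternating, and every triple
`(Ψ(g), Ψ(h), Ψ(gh)⁻¹)` is letter-thin or degenerate. -/
def IsWellBehavedLQM {G : Type*} [Group G] (Ψ : G → W) : Prop :=
  (∀ g, Ψ g ∈ Alt) ∧
  (∀ g : G, Ψ g⁻¹ = (Ψ g)⁻¹) ∧
  (∀ g h : G,
    LetterThin (Ψ g) (Ψ h) ((Ψ (g * h))⁻¹) ∨ Degenerate (Ψ g) (Ψ h) ((Ψ (g * h))⁻¹))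

/-- `ζ_s`: the word prepended to `w` in the definition of `w̃`, depending on the
first letter of `w`. -/
def zetaS (p : Fin 2 × Bool) : W :=
  if p.1 = 0 then (if p.2 then 1 else FreeGroup.of 0 * FreeGroup.of 0)
  else FreeGroup.of 0

/-- `ζ_e`: the word appended to `w` in the definition of `w̃`, depending on the
last letter of `w`. -/
def zetaE (p : Fin 2 × Bool) : W :=
  if p.1 = 0 then (if p.2 then ((FreeGroup.of (0 : Fin 2)) * FreeGroup.of 0)⁻¹ else 1)
  else (FreeGroup.of (0 : Fin 2))⁻¹

/-- The map `w ↦ w̃`: `w̃ = e` for `w ∈ {a, e, a⁻¹}`, and otherwise `w̃` is the reduced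
form of `ζ_s(z_s)·w·ζ_e(z_e)` where `z_s`, `z_e` are the first and last letters of `w`. -/
def tildeW (w : W) : W :=
  match w.toWord with
  | [] => 1
  | [p] => if p.1 = (0 : Fin 2) then 1 else zetaS p * w * zetaE p
  | p :: q :: rest => zetaS p * w * zetaE ((q :: rest).getLast (List.cons_ne_nil q rest))


open List


abbrev Λ : Type := Fin 2 × Bool
def AltL (L : List Λ) : Prop := List.Chain' (fun p q : Λ => p.1 ≠ q.1) L
def lA : Λ := ((0 : Fin 2), true)
def lA' : Λ := ((0 : Fin 2), false)
def lB : Λ := ((1 : Fin 2), true)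
def lB' : Λ := ((1 : Fin 2), false)
def negP (p : Λ) : Λ := (p.1, !p.2)

lemma invRev_append (M N : List Λ) : invRev (M ++ N) = invRev N ++ invRev M := by
  simp [invRev]

lemma invRev_cons (x : Λ) (M : List Λ) : invRev (x :: M) = invRev M ++ [negP x] := by
  simp [invRev, negP]

lemma invRev_concat (x : Λ) (M : List Λ) : invRev (M ++ [x]) = negP x :: invRev M := by
  simp [invRev, negP]

lemma invRev_nil : invRev ([] : List Λ) = [] := rfl

lemma altL_invRev {L : List Λ} (h : AltL L) : AltL (invRev L) := by
  unfold AltL invRev at *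
  unfold List.Chain' at *
  rw [List.isChain_reverse]
  apply (List.isChain_map _).2
  exact List.IsChain.imp (fun a b hab => by exact fun e => hab e.symm) h

lemma altL_append_iff {M N : List Λ} : AltL (M ++ N) ↔
    AltL M ∧ AltL N ∧ ∀ x ∈ M.getLast?, ∀ y ∈ N.head?, x.1 ≠ y.1 := by
  exact List.isChain_append

lemma reduce_alt : ∀ {L : List Λ}, AltL L → FreeGroup.reduce L = L := by
  intro L
  induction L with
  | nil => intro _; rfl
  | cons x xs ih =>
    intro h
    have hxs : AltL xs := h.tail
    rw [FreeGroup.reduce.cons, ih hxs]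
    cases xs with
    | nil => rfl
    | cons y ys =>
      have hxy : x.1 ≠ y.1 := List.isChain_cons_cons.mp h |>.1
      simp only [List.casesOn]
      rw [if_neg]
      rintro ⟨h1, -⟩; exact hxy h1

lemma toWord_mk_alt {L : List Λ} (h : AltL L) : (FreeGroup.mk L).toWord = L := by
  rw [FreeGroup.toWord_mk, reduce_alt h]

def Dl (L : List Λ) : List Λ :=
  match L.getLast? with
  | none => []
  | some z => if z.1 = 0 then (if z.2 then L.dropLast ++ [lA'] else L) else L ++ [lA']

def Pl (L : List Λ) : List Λ :=
  match L.head? with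
  | none => []
  | some z => if z.1 = 0 then (if z.2 then L else lA :: L.tail) else lA :: L

lemma Dl_append {N : List Λ} (M : List Λ) (hN : N ≠ []) : Dl (M ++ N) = M ++ Dl N := by
  unfold Dl
  rw [List.getLast?_append_of_ne_nil _ hN]
  cases h : N.getLast? with
  | none => exact absurd (List.getLast?_eq_none_iff.mp h) hN
  | some z =>
    simp only []
    split
    · split
      · rw [List.dropLast_append_of_ne_nil hN]; simp
      · rfl
    · simp

lemma Pl_append {M : List Λ} (N : List Λ) (hM : M ≠ []) : Pl (M ++ N) = Pl M ++ N := by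
  unfold Pl
  rw [List.head?_append_of_ne_nil _ hM]
  cases h : M.head? with
  | none => exact absurd (List.head?_eq_none_iff.mp h) hM
  | some z =>
    simp only []
    split
    · split
      · rfl
      · rw [List.tail_append_of_ne_nil hM]; rfl
    · rfl


lemma fin2 (i : Fin 2) : i = 0 ∨ i = 1 := by omega

lemma pA : ((0 : Fin 2), true) = lA := rfl
lemma pA' : ((0 : Fin 2), false) = lA' := rfl

lemma Dl_cons {T : List Λ} (p : Λ) (hT : T ≠ []) : Dl (p :: T) = p :: Dl T :=
  Dl_append [p] hT

lemma Dl_nil : Dl ([] : List Λ) = [] := rfl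

lemma Pl_nil : Pl ([] : List Λ) = [] := rfl

lemma Dl_concat_A (M : List Λ) : Dl (M ++ [lA]) = M ++ [lA'] := by
  unfold Dl; rw [List.getLast?_concat]; simp [lA, lA']

lemma Dl_concat_A' (M : List Λ) : Dl (M ++ [lA']) = M ++ [lA'] := by
  unfold Dl; rw [List.getLast?_concat]; simp [lA']

lemma Dl_concat_B (M : List Λ) (s : Bool) : Dl (M ++ [((1 : Fin 2), s)]) = M ++ [((1 : Fin 2), s), lA'] := by
  unfold Dl; rw [List.getLast?_concat]; simp

lemma Pl_cons_A (T : List Λ) : Pl (lA :: T) = lA :: T := by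
  unfold Pl; simp [lA]

lemma Pl_cons_A' (T : List Λ) : Pl (lA' :: T) = lA :: T := by
  unfold Pl; simp [lA']

lemma Pl_cons_B (s : Bool) (T : List Λ) : Pl (((1 : Fin 2), s) :: T) = lA :: ((1 : Fin 2), s) :: T := by
  unfold Pl; simp

lemma Dl_ne_nil {L : List Λ} (hL : L ≠ []) : Dl L ≠ [] := by
  rcases List.eq_nil_or_concat L with rfl | ⟨M, z, rfl⟩
  · exact absurd rfl hL
  · rw [List.concat_eq_append]
    rcases z with ⟨i, s⟩
    rcases fin2 i with rfl | rfl <;> cases s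
    · rw [pA', Dl_concat_A']; simp
    · rw [pA, Dl_concat_A]; simp
    · rw [Dl_concat_B]; simp
    · rw [Dl_concat_B]; simp

lemma altL_Dl {L : List Λ} (h : AltL L) : AltL (Dl L) := by
  rcases List.eq_nil_or_concat L with rfl | ⟨M, z, rfl⟩
  · exact h
  · rw [List.concat_eq_append] at *
    rcases altL_append_iff.mp h with ⟨hM, -, hj⟩
    have hj' : ∀ x ∈ M.getLast?, x.1 ≠ (0 : Fin 2) → AltL (M ++ [lA']) := by
      intro x hx hx0
      refine altL_append_iff.mpr ⟨hM, List.isChain_singleton _, ?_⟩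
      intro x' hx' y hy
      simp only [List.head?_cons, Option.mem_def, Option.some.injEq] at hy
      rw [Option.mem_def] at hx hx'
      rw [hx] at hx'
      cases hx'
      subst hy
      exact hx0
    rcases z with ⟨i, s⟩
    rcases fin2 i with rfl | rfl <;> cases s
    · rw [pA'] at *; rw [Dl_concat_A']; exact h
    · rw [pA] at *
      rw [Dl_concat_A]
      cases hM' : M.getLast? with
      | none => rw [List.getLast?_eq_none_iff] at hM'; subst hM'; simp [AltL, List.Chain']
      | some x =>
        refine hj' x (by rw [hM']; rfl) ?_
        have := hj x (by rw [hM']; rfl) lA (by simp)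
        simpa [lA] using this
    · rw [Dl_concat_B]
      rw [show M ++ [((1:Fin 2), false), lA'] = (M ++ [((1:Fin 2), false)]) ++ [lA'] by simp]
      refine altL_append_iff.mpr ⟨h, List.isChain_singleton _, ?_⟩
      intro x hx y hy
      rw [List.getLast?_concat] at hx
      simp only [List.head?_cons, Option.mem_def, Option.some.injEq] at hx hy
      subst hx
      rw [← hy]; simp [lA']
    · rw [Dl_concat_B]
      rw [show M ++ [((1:Fin 2), true), lA'] = (M ++ [((1:Fin 2), true)]) ++ [lA'] by simp]
      refine altL_append_iff.mpr ⟨h, List.isChain_singleton _, ?_⟩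
      intro x hx y hy
      rw [List.getLast?_concat] at hx
      simp only [List.head?_cons, Option.mem_def, Option.some.injEq] at hx hy
      subst hx
      rw [← hy]; simp [lA']

lemma altL_Pl {L : List Λ} (h : AltL L) : AltL (Pl L) := by
  cases L with
  | nil => exact h
  | cons z T =>
    rcases z with ⟨i, s⟩
    rcases fin2 i with rfl | rfl <;> cases s
    · rw [pA'] at *
      rw [Pl_cons_A']
      refine List.isChain_cons.mpr ⟨?_, h.tail⟩
      intro y hy
      have := List.isChain_cons.mp h
      exact this.1 y hy
    · rw [pA] at *
      rw [Pl_cons_A]; exact h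
    · rw [Pl_cons_B]
      exact List.isChain_cons.mpr ⟨by rintro y hy; simp at hy; subst hy; simp [lA], h⟩
    · rw [Pl_cons_B]
      exact List.isChain_cons.mpr ⟨by rintro y hy; simp at hy; subst hy; simp [lA], h⟩

lemma mk_A : FreeGroup.mk [lA] = FreeGroup.of (0 : Fin 2) := rfl

lemma mk_A' : FreeGroup.mk [lA'] = (FreeGroup.of (0 : Fin 2))⁻¹ := by
  rw [← mk_A, FreeGroup.inv_mk]; rfl

lemma mk_concat_zetaE (M : List Λ) (z : Λ) :
    FreeGroup.mk (M ++ [z]) * zetaE z = FreeGroup.mk (Dl (M ++ [z])) := by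
  rcases z with ⟨i, s⟩
  rcases fin2 i with rfl | rfl <;> cases s
  · rw [pA', Dl_concat_A']
    simp [zetaE, lA']
  · rw [pA, Dl_concat_A]
    have : FreeGroup.mk (M ++ [lA]) = FreeGroup.mk M * FreeGroup.of 0 := by
      rw [← mk_A, FreeGroup.mul_mk]
    rw [this]
    have : FreeGroup.mk (M ++ [lA']) = FreeGroup.mk M * (FreeGroup.of 0)⁻¹ := by
      rw [← mk_A', FreeGroup.mul_mk]
    rw [this]
    simp [zetaE, lA]
  · rw [Dl_concat_B]
    have : zetaE ((1 : Fin 2), false) = FreeGroup.mk [lA'] := by rw [mk_A']; simp [zetaE]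
    rw [this, FreeGroup.mul_mk]
    simp
  · rw [Dl_concat_B]
    have : zetaE ((1 : Fin 2), true) = FreeGroup.mk [lA'] := by rw [mk_A']; simp [zetaE]
    rw [this, FreeGroup.mul_mk]
    simp

lemma zetaS_mul_mk (z : Λ) (T : List Λ) :
    zetaS z * FreeGroup.mk (z :: T) = FreeGroup.mk (Pl (z :: T)) := by
  rcases z with ⟨i, s⟩
  rcases fin2 i with rfl | rfl <;> cases s
  · rw [pA', Pl_cons_A']
    have h1 : FreeGroup.mk (lA' :: T) = (FreeGroup.of 0)⁻¹ * FreeGroup.mk T := by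
      rw [← mk_A', FreeGroup.mul_mk]; rfl
    have h2 : FreeGroup.mk (lA :: T) = FreeGroup.of 0 * FreeGroup.mk T := by
      rw [← mk_A, FreeGroup.mul_mk]; rfl
    rw [h1, h2]
    simp [zetaS, lA']
  · rw [pA, Pl_cons_A]
    simp [zetaS, lA]
  · rw [Pl_cons_B]
    have : zetaS ((1 : Fin 2), false) = FreeGroup.mk [lA] := by rw [mk_A]; simp [zetaS]
    rw [this, FreeGroup.mul_mk]; rfl
  · rw [Pl_cons_B]
    have : zetaS ((1 : Fin 2), true) = FreeGroup.mk [lA] := by rw [mk_A]; simp [zetaS]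
    rw [this, FreeGroup.mul_mk]; rfl

lemma alt_iff {w : W} : w ∈ Alt ↔ AltL w.toWord := Iff.rfl

lemma tildeW_of_nil {w : W} (h : w.toWord = []) : tildeW w = 1 := by
  unfold tildeW; rw [h]

lemma tildeW_of_A {w : W} (h : w.toWord = [lA]) : tildeW w = 1 := by
  unfold tildeW; rw [h]; simp [lA]

lemma tildeW_of_A' {w : W} (h : w.toWord = [lA']) : tildeW w = 1 := by
  unfold tildeW; rw [h]; simp [lA']

lemma tilde_mk {w : W} {L : List Λ} (hw : w.toWord = L)
    (hL : 2 ≤ L.length ∨ ∃ s : Bool, L = [((1 : Fin 2), s)]) :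
    tildeW w = FreeGroup.mk (Pl (Dl L)) := by
  have hwmk : w = FreeGroup.mk L := by rw [← hw, FreeGroup.mk_toWord]
  rcases hL with h2 | ⟨s, rfl⟩
  · cases L with
    | nil => simp at h2
    | cons p T =>
      cases T with
      | nil => simp at h2
      | cons q rest =>
        unfold tildeW
        rw [hw]
        show zetaS p * w * zetaE ((q :: rest).getLast (List.cons_ne_nil q rest)) =
          FreeGroup.mk (Pl (Dl (p :: q :: rest)))
        rcases List.eq_nil_or_concat (q :: rest) with hc | ⟨M, z, hM⟩
        · simp at hc
        · rw [List.concat_eq_append] at hM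
          have hgl : (q :: rest).getLast (List.cons_ne_nil q rest) = z := by
            have h1 : (q :: rest).getLast? = some z := by rw [hM]; exact List.getLast?_concat
            have h2 : (q :: rest).getLast? = some ((q :: rest).getLast (List.cons_ne_nil q rest)) :=
              List.getLast?_eq_getLast _
            rw [h1] at h2
            exact (Option.some.injEq _ _ ▸ h2.symm :)
          rw [hgl, hwmk, hM]
          rw [show p :: (M ++ [z]) = (p :: M) ++ [z] from rfl]
          rw [mul_assoc, mk_concat_zetaE (p :: M) z]
          rw [show Dl ((p :: M) ++ [z]) = p :: Dl (M ++ [z]) from Dl_cons p (by simp)]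
          rw [zetaS_mul_mk]
  · unfold tildeW
    rw [hw]
    show (if ((1:Fin 2), s).1 = 0 then 1 else zetaS ((1:Fin 2), s) * w * zetaE ((1:Fin 2), s)) =
      FreeGroup.mk (Pl (Dl [((1:Fin 2), s)]))
    have hne : ¬((1:Fin 2), s).1 = 0 := by simp
    rw [if_neg hne]
    have hD : Dl [((1:Fin 2), s)] = [((1:Fin 2), s), lA'] := by
      simpa using Dl_concat_B [] s
    have e1 : FreeGroup.mk [((1:Fin 2), s)] * zetaE ((1:Fin 2), s) =
        FreeGroup.mk [((1:Fin 2), s), lA'] := by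
      have h := mk_concat_zetaE [] ((1:Fin 2), s)
      simp only [List.nil_append] at h
      rw [h, hD]
    rw [hwmk, hD, mul_assoc, e1]
    exact zetaS_mul_mk ((1:Fin 2), s) [lA']

lemma toWord_tilde {w : W} {L : List Λ} (hw : w.toWord = L) (hA : AltL L)
    (hL : 2 ≤ L.length ∨ ∃ s : Bool, L = [((1 : Fin 2), s)]) :
    (tildeW w).toWord = Pl (Dl L) := by
  rw [tilde_mk hw hL, toWord_mk_alt (altL_Pl (altL_Dl hA))]

lemma tildeW_alt {w : W} (h : w ∈ Alt) : tildeW w ∈ Alt := by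
  rcases hL : w.toWord with _ | ⟨p, T⟩
  · rw [alt_iff, tildeW_of_nil hL, FreeGroup.toWord_one]; exact List.isChain_nil
  · rcases T with _ | ⟨q, rest⟩
    · rcases p with ⟨i, s⟩
      rcases fin2 i with rfl | rfl
      · cases s
        · rw [alt_iff, tildeW_of_A' (by rw [hL]; rfl), FreeGroup.toWord_one]; exact List.isChain_nil
        · rw [alt_iff, tildeW_of_A (by rw [hL]; rfl), FreeGroup.toWord_one]; exact List.isChain_nil
      · rw [alt_iff, toWord_tilde hL (by rw [alt_iff, hL] at h; exact h) (Or.inr ⟨s, rfl⟩)]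
        exact altL_Pl (altL_Dl (by rw [alt_iff, hL] at h; exact h))
    · rw [alt_iff, toWord_tilde hL (by rw [alt_iff, hL] at h; exact h) (Or.inl (by simp))]
      exact altL_Pl (altL_Dl (by rw [alt_iff, hL] at h; exact h))

lemma Pl_invRev {L : List Λ} (hL : L ≠ []) : Pl (invRev L) = invRev (Dl L) := by
  rcases List.eq_nil_or_concat L with rfl | ⟨M, z, hM⟩
  · exact absurd rfl hL
  · rw [List.concat_eq_append] at hM
    subst hM
    rw [invRev_concat]
    rcases z with ⟨i, s⟩
    rcases fin2 i with rfl | rfl <;> cases s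
    · rw [pA', Dl_concat_A', invRev_concat]
      rw [show negP lA' = lA from rfl, Pl_cons_A]
    · rw [pA, Dl_concat_A, invRev_concat]
      rw [show negP lA = lA' from rfl, Pl_cons_A']
      rw [show negP lA' = lA from rfl]
    · rw [Dl_concat_B]
      rw [show M ++ [((1:Fin 2), false), lA'] = (M ++ [((1:Fin 2), false)]) ++ [lA'] by simp]
      rw [invRev_concat, invRev_concat]
      rw [show negP ((1:Fin 2), false) = ((1:Fin 2), true) from rfl, Pl_cons_B]
      rfl
    · rw [Dl_concat_B]
      rw [show M ++ [((1:Fin 2), true), lA'] = (M ++ [((1:Fin 2), true)]) ++ [lA'] by simp]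
      rw [invRev_concat, invRev_concat]
      rw [show negP ((1:Fin 2), true) = ((1:Fin 2), false) from rfl, Pl_cons_B]
      rfl

lemma Dl_invRev {L : List Λ} (hL : L ≠ []) : Dl (invRev L) = invRev (Pl L) := by
  have h2 : invRev L ≠ [] := by
    intro h; apply hL
    have := congrArg invRev h
    rwa [FreeGroup.invRev_invRev] at this
  have := Pl_invRev h2
  rw [FreeGroup.invRev_invRev] at this
  rw [this, FreeGroup.invRev_invRev]

lemma PlDl_comm {L : List Λ} (h2 : 2 ≤ L.length) : Pl (Dl L) = Dl (Pl L) := by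
  cases L with
  | nil => simp at h2
  | cons z T =>
    have hT : T ≠ [] := by intro h; rw [h] at h2; simp at h2
    rw [Dl_cons z hT]
    rcases z with ⟨i, s⟩
    rcases fin2 i with rfl | rfl <;> cases s
    · rw [pA', Pl_cons_A', Pl_cons_A', Dl_cons lA hT]
    · rw [pA, Pl_cons_A, Pl_cons_A, Dl_cons lA hT]
    · rw [Pl_cons_B, Pl_cons_B, Dl_cons lA (by simp), Dl_cons _ hT]
    · rw [Pl_cons_B, Pl_cons_B, Dl_cons lA (by simp), Dl_cons _ hT]

lemma pl_ne_nil {L : List Λ} (hL : L ≠ []) : Pl L ≠ [] := by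
  cases L with
  | nil => exact absurd rfl hL
  | cons z T =>
    rcases z with ⟨i, s⟩
    rcases fin2 i with rfl | rfl <;> cases s
    · rw [pA', Pl_cons_A']; simp
    · rw [pA, Pl_cons_A]; simp
    · rw [Pl_cons_B]; simp
    · rw [Pl_cons_B]; simp

lemma tilde_inv (w : W) : tildeW w⁻¹ = (tildeW w)⁻¹ := by
  rcases hL : w.toWord with _ | ⟨p, T⟩
  · have h1 : w = 1 := FreeGroup.toWord_eq_nil_iff.mp hL
    rw [h1, inv_one, tildeW_of_nil (by rw [FreeGroup.toWord_one]), inv_one]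
  · have hinv : w⁻¹.toWord = invRev w.toWord := FreeGroup.toWord_inv w
    rcases T with _ | ⟨q, rest⟩
    · rcases p with ⟨i, s⟩
      rcases fin2 i with rfl | rfl
      · cases s
        · rw [tildeW_of_A (by rw [hinv, hL]; rfl), tildeW_of_A' (by rw [hL]; rfl), inv_one]
        · rw [tildeW_of_A' (by rw [hinv, hL]; rfl), tildeW_of_A (by rw [hL]; rfl), inv_one]
      · have h1 : w⁻¹.toWord = [((1:Fin 2), !s)] := by rw [hinv, hL]; rfl
        rw [tilde_mk h1 (Or.inr ⟨!s, rfl⟩), tilde_mk hL (Or.inr ⟨s, rfl⟩)]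
        rw [FreeGroup.inv_mk]
        cases s <;> rfl
    · have hlen : 2 ≤ (p :: q :: rest).length := by simp
      have h1 : w⁻¹.toWord = invRev (p :: q :: rest) := by rw [hinv, hL]
      have hlen2 : 2 ≤ (invRev (p :: q :: rest)).length := by
        rw [FreeGroup.invRev_length]; simp
      rw [tilde_mk h1 (Or.inl hlen2), tilde_mk hL (Or.inl hlen)]
      rw [FreeGroup.inv_mk]
      congr 1
      rw [Dl_invRev (by simp), Pl_invRev (pl_ne_nil (by simp)), PlDl_comm hlen]


def mA (p : Λ) : Λ := if p.1 = 0 then negP p else p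
def mB (p : Λ) : Λ := if p.1 = 1 then negP p else p

lemma mA_fst (p : Λ) : (mA p).1 = p.1 := by unfold mA negP; split <;> rfl
lemma mB_fst (p : Λ) : (mB p).1 = p.1 := by unfold mB negP; split <;> rfl

lemma altL_mapA {L : List Λ} (h : AltL L) : AltL (L.map mA) := by
  unfold AltL at *
  unfold List.Chain' at *
  rw [List.isChain_map]
  exact h.imp (fun a b hab => by rw [mA_fst, mA_fst]; exact hab)

lemma altL_mapB {L : List Λ} (h : AltL L) : AltL (L.map mB) := by
  unfold AltL at *
  unfold List.Chain' at *
  rw [List.isChain_map]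
  exact h.imp (fun a b hab => by rw [mB_fst, mB_fst]; exact hab)

lemma mapA_invRev (L : List Λ) : (invRev L).map mA = invRev (L.map mA) := by
  simp only [invRev, List.map_reverse, List.map_map]
  congr 1
  apply List.map_congr_left
  intro p _
  rcases p with ⟨i, s⟩
  rcases fin2 i with rfl | rfl <;> cases s <;> rfl

lemma mapB_invRev (L : List Λ) : (invRev L).map mB = invRev (L.map mB) := by
  simp only [invRev, List.map_reverse, List.map_map]
  congr 1
  apply List.map_congr_left
  intro p _
  rcases p with ⟨i, s⟩
  rcases fin2 i with rfl | rfl <;> cases s <;> rfl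

lemma of1_inv : (FreeGroup.of (1 : Fin 2))⁻¹ = FreeGroup.mk [((1 : Fin 2), false)] := by
  rw [show FreeGroup.of (1:Fin 2) = FreeGroup.mk [((1:Fin 2), true)] from rfl,
    FreeGroup.inv_mk]
  rfl

lemma of0_inv : (FreeGroup.of (0 : Fin 2))⁻¹ = FreeGroup.mk [lA'] := mk_A'.symm

lemma phiaF_of0 : phiaF (FreeGroup.of (0 : Fin 2)) = (FreeGroup.of (0 : Fin 2))⁻¹ := by
  simp [phiaF]

lemma phiaF_of1 : phiaF (FreeGroup.of (1 : Fin 2)) = FreeGroup.of (1 : Fin 2) := by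
  simp [phiaF]

lemma phibF_of0 : phibF (FreeGroup.of (0 : Fin 2)) = FreeGroup.of (0 : Fin 2) := by
  simp [phibF]

lemma phibF_of1 : phibF (FreeGroup.of (1 : Fin 2)) = (FreeGroup.of (1 : Fin 2))⁻¹ := by
  simp [phibF]

lemma phiaF_mk (L : List Λ) : phiaF (FreeGroup.mk L) = FreeGroup.mk (L.map mA) := by
  induction L with
  | nil =>
    rw [show FreeGroup.mk ([] : List Λ) = 1 from rfl, phiaF.map_one]
    rfl
  | cons p T ih =>
    rw [show p :: T = [p] ++ T from rfl, ← FreeGroup.mul_mk, _root_.map_mul, ih,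
      List.map_append, ← FreeGroup.mul_mk]
    congr 1
    rcases p with ⟨i, s⟩
    rcases fin2 i with rfl | rfl <;> cases s
    · rw [show FreeGroup.mk [((0:Fin 2), false)] = (FreeGroup.of (0:Fin 2))⁻¹ from mk_A',
        phiaF.map_inv, phiaF_of0, inv_inv]
      rfl
    · rw [show FreeGroup.mk [((0:Fin 2), true)] = FreeGroup.of (0:Fin 2) from rfl,
        phiaF_of0, of0_inv]
      rfl
    · rw [show FreeGroup.mk [((1:Fin 2), false)] = (FreeGroup.of (1:Fin 2))⁻¹ from of1_inv.symm,
        phiaF.map_inv, phiaF_of1, of1_inv]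
      rfl
    · rw [show FreeGroup.mk [((1:Fin 2), true)] = FreeGroup.of (1:Fin 2) from rfl, phiaF_of1]
      rfl

lemma phibF_mk (L : List Λ) : phibF (FreeGroup.mk L) = FreeGroup.mk (L.map mB) := by
  induction L with
  | nil =>
    rw [show FreeGroup.mk ([] : List Λ) = 1 from rfl, phibF.map_one]
    rfl
  | cons p T ih =>
    rw [show p :: T = [p] ++ T from rfl, ← FreeGroup.mul_mk, _root_.map_mul, ih,
      List.map_append, ← FreeGroup.mul_mk]
    congr 1
    rcases p with ⟨i, s⟩
    rcases fin2 i with rfl | rfl <;> cases s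
    · rw [show FreeGroup.mk [((0:Fin 2), false)] = (FreeGroup.of (0:Fin 2))⁻¹ from mk_A',
        phibF.map_inv, phibF_of0, of0_inv]
      rfl
    · rw [show FreeGroup.mk [((0:Fin 2), true)] = FreeGroup.of (0:Fin 2) from rfl, phibF_of0]
      rfl
    · rw [show FreeGroup.mk [((1:Fin 2), false)] = (FreeGroup.of (1:Fin 2))⁻¹ from of1_inv.symm,
        phibF.map_inv, phibF_of1, inv_inv]
      rfl
    · rw [show FreeGroup.mk [((1:Fin 2), true)] = FreeGroup.of (1:Fin 2) from rfl,
        phibF_of1, of1_inv]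
      rfl

lemma alt_inv {w : W} (h : w ∈ Alt) : w⁻¹ ∈ Alt := by
  rw [alt_iff, FreeGroup.toWord_inv]
  exact altL_invRev h

lemma equiv_rot (x₁ x₂ x₃ : W) : TripleEquiv (x₁, x₂, x₃) (x₂, x₃, x₁) :=
  Relation.EqvGen.rel _ _ (Or.inl rfl)

lemma equiv_sigma (x₁ x₂ x₃ : W) : TripleEquiv (x₁, x₂, x₃) (x₃⁻¹, x₂⁻¹, x₁⁻¹) :=
  Relation.EqvGen.rel _ _ (Or.inr (Or.inl rfl))

lemma equiv_phia (x₁ x₂ x₃ : W) : TripleEquiv (x₁, x₂, x₃) (phiaF x₁, phiaF x₂, phiaF x₃) :=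
  Relation.EqvGen.rel _ _ (Or.inr (Or.inr (Or.inl rfl)))

lemma equiv_phib (x₁ x₂ x₃ : W) : TripleEquiv (x₁, x₂, x₃) (phibF x₁, phibF x₂, phibF x₃) :=
  Relation.EqvGen.rel _ _ (Or.inr (Or.inr (Or.inr rfl)))

lemma thin_rot {x₁ x₂ x₃ : W} (h : LetterThin x₂ x₃ x₁) : LetterThin x₁ x₂ x₃ := by
  obtain ⟨a2, a3, a1, y₁, y₂, y₃, hE, hF⟩ := h
  exact ⟨a1, a2, a3, y₁, y₂, y₃, Relation.EqvGen.trans _ _ _ (equiv_rot x₁ x₂ x₃) hE, hF⟩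

lemma thin_sigma {x₁ x₂ x₃ : W} (h : LetterThin x₃⁻¹ x₂⁻¹ x₁⁻¹) : LetterThin x₁ x₂ x₃ := by
  obtain ⟨a3, a2, a1, y₁, y₂, y₃, hE, hF⟩ := h
  refine ⟨?_, ?_, ?_, y₁, y₂, y₃, Relation.EqvGen.trans _ _ _ (equiv_sigma x₁ x₂ x₃) hE, hF⟩
  · simpa using alt_inv a1
  · simpa using alt_inv a2
  · simpa using alt_inv a3

lemma thin_phia {x₁ x₂ x₃ : W} (a1 : x₁ ∈ Alt) (a2 : x₂ ∈ Alt) (a3 : x₃ ∈ Alt)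
    (h : LetterThin (phiaF x₁) (phiaF x₂) (phiaF x₃)) : LetterThin x₁ x₂ x₃ := by
  obtain ⟨-, -, -, y₁, y₂, y₃, hE, hF⟩ := h
  exact ⟨a1, a2, a3, y₁, y₂, y₃, Relation.EqvGen.trans _ _ _ (equiv_phia x₁ x₂ x₃) hE, hF⟩

lemma thin_phib {x₁ x₂ x₃ : W} (a1 : x₁ ∈ Alt) (a2 : x₂ ∈ Alt) (a3 : x₃ ∈ Alt)
    (h : LetterThin (phibF x₁) (phibF x₂) (phibF x₃)) : LetterThin x₁ x₂ x₃ := by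
  obtain ⟨-, -, -, y₁, y₂, y₃, hE, hF⟩ := h
  exact ⟨a1, a2, a3, y₁, y₂, y₃, Relation.EqvGen.trans _ _ _ (equiv_phib x₁ x₂ x₃) hE, hF⟩

lemma degen_rot {x₁ x₂ x₃ : W} (h : Degenerate x₂ x₃ x₁) : Degenerate x₁ x₂ x₃ := by
  obtain ⟨u, hu⟩ := h
  exact ⟨u, Relation.EqvGen.trans _ _ _ (equiv_rot x₁ x₂ x₃) hu⟩

lemma degen_pair (u : W) : Degenerate u u⁻¹ 1 := ⟨u, Relation.EqvGen.refl _⟩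

lemma degen_pair' (u v : W) (h : v = u⁻¹) : Degenerate u v 1 := h ▸ degen_pair u

lemma invRev_triple (X Y : List Λ) (z : Λ) :
    invRev (X ++ [z] ++ Y) = invRev Y ++ [negP z] ++ invRev X := by
  rw [_root_.invRev_append, invRev_concat]
  simp

lemma mem_alt_mk {L : List Λ} (h : AltL L) : FreeGroup.mk L ∈ Alt := by
  rw [alt_iff, toWord_mk_alt h]; exact h

lemma formT1a_intro (p q r : List Λ)
    (h1 : AltL (invRev p ++ [lA, lB] ++ q)) (h2 : AltL (invRev q ++ [lB', lA] ++ r))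
    (h3 : AltL (invRev r ++ [lA'] ++ p)) :
    FormT1a (FreeGroup.mk (invRev p ++ [lA, lB] ++ q))
      (FreeGroup.mk (invRev q ++ [lB', lA] ++ r))
      (FreeGroup.mk (invRev r ++ [lA'] ++ p)) := by
  have hp : AltL p := (altL_append_iff.mp h3).2.1
  have hq : AltL q := (altL_append_iff.mp h1).2.1
  have hr : AltL r := (altL_append_iff.mp h2).2.1
  refine ⟨FreeGroup.mk p, FreeGroup.mk q, FreeGroup.mk r,
    mem_alt_mk hp, mem_alt_mk hq, mem_alt_mk hr, ?_, ?_, ?_⟩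
  · rw [toWord_mk_alt h1, FreeGroup.inv_mk, toWord_mk_alt (altL_invRev hp), toWord_mk_alt hq]
    rfl
  · rw [toWord_mk_alt h2, FreeGroup.inv_mk, toWord_mk_alt (altL_invRev hq), toWord_mk_alt hr]
    rfl
  · rw [toWord_mk_alt h3, FreeGroup.inv_mk, toWord_mk_alt (altL_invRev hr), toWord_mk_alt hp]
    rfl

lemma formT1b_intro (p q r : List Λ)
    (h1 : AltL (invRev p ++ [lB, lA] ++ q)) (h2 : AltL (invRev q ++ [lA', lB] ++ r))
    (h3 : AltL (invRev r ++ [lB'] ++ p)) :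
    FormT1b (FreeGroup.mk (invRev p ++ [lB, lA] ++ q))
      (FreeGroup.mk (invRev q ++ [lA', lB] ++ r))
      (FreeGroup.mk (invRev r ++ [lB'] ++ p)) := by
  have hp : AltL p := (altL_append_iff.mp h3).2.1
  have hq : AltL q := (altL_append_iff.mp h1).2.1
  have hr : AltL r := (altL_append_iff.mp h2).2.1
  refine ⟨FreeGroup.mk p, FreeGroup.mk q, FreeGroup.mk r,
    mem_alt_mk hp, mem_alt_mk hq, mem_alt_mk hr, ?_, ?_, ?_⟩
  · rw [toWord_mk_alt h1, FreeGroup.inv_mk, toWord_mk_alt (altL_invRev hp), toWord_mk_alt hq]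
    rfl
  · rw [toWord_mk_alt h2, FreeGroup.inv_mk, toWord_mk_alt (altL_invRev hq), toWord_mk_alt hr]
    rfl
  · rw [toWord_mk_alt h3, FreeGroup.inv_mk, toWord_mk_alt (altL_invRev hr), toWord_mk_alt hp]
    rfl

lemma thin_of_T1a {y1 y2 y3 : W} (a1 : y1 ∈ Alt) (a2 : y2 ∈ Alt) (a3 : y3 ∈ Alt)
    (hf : FormT1a y1 y2 y3) : LetterThin y1 y2 y3 :=
  ⟨a1, a2, a3, y1, y2, y3, Relation.EqvGen.refl _, Or.inl hf⟩

lemma thin_of_T1b {y1 y2 y3 : W} (a1 : y1 ∈ Alt) (a2 : y2 ∈ Alt) (a3 : y3 ∈ Alt)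
    (hf : FormT1b y1 y2 y3) : LetterThin y1 y2 y3 :=
  ⟨a1, a2, a3, y1, y2, y3, Relation.EqvGen.refl _, Or.inr (Or.inl hf)⟩

lemma negP_A : negP lA = lA' := rfl
lemma negP_A' : negP lA' = lA := rfl
lemma negP_B : negP lB = lB' := rfl
lemma negP_B' : negP lB' = lB := rfl

lemma coreB1 (p q' r : List Λ)
    (h1 : AltL (invRev p ++ [lB, lA] ++ q')) (h2 : AltL (invRev q' ++ [lA', lB] ++ r))
    (h3 : AltL (invRev r ++ [lB'] ++ p)) :
    LetterThin (FreeGroup.mk (invRev p ++ [lB, lA] ++ q'))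
      (FreeGroup.mk (invRev q' ++ [lA', lB] ++ r))
      (FreeGroup.mk (invRev r ++ [lB'] ++ p)) :=
  thin_of_T1b (mem_alt_mk h1) (mem_alt_mk h2) (mem_alt_mk h3) (formT1b_intro p q' r h1 h2 h3)

lemma coreA1 (p q' r : List Λ)
    (h1 : AltL (invRev p ++ [lA, lB] ++ q')) (h2 : AltL (invRev q' ++ [lB', lA] ++ r))
    (h3 : AltL (invRev r ++ [lA'] ++ p)) :
    LetterThin (FreeGroup.mk (invRev p ++ [lA, lB] ++ q'))
      (FreeGroup.mk (invRev q' ++ [lB', lA] ++ r))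
      (FreeGroup.mk (invRev r ++ [lA'] ++ p)) :=
  thin_of_T1a (mem_alt_mk h1) (mem_alt_mk h2) (mem_alt_mk h3) (formT1a_intro p q' r h1 h2 h3)

lemma coreB (p q r : List Λ)
    (h1 : AltL (invRev p ++ [lB] ++ q)) (h2 : AltL (invRev q ++ [lB] ++ r))
    (h3 : AltL (invRev r ++ [lB'] ++ p)) (hq : q ≠ []) :
    LetterThin (FreeGroup.mk (invRev p ++ [lB] ++ q))
      (FreeGroup.mk (invRev q ++ [lB] ++ r))
      (FreeGroup.mk (invRev r ++ [lB'] ++ p)) := by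
  obtain ⟨z, q', rfl⟩ : ∃ z q', q = z :: q' := by
    cases q with
    | nil => exact absurd rfl hq
    | cons z q' => exact ⟨z, q', rfl⟩
  have hz : z.1 = 0 := by
    have hj := (altL_append_iff.mp h1).2.2 lB
      (by rw [List.getLast?_concat]; rfl) z (by simp)
    rcases fin2 z.1 with h | h
    · exact h
    · exact absurd h.symm (by simpa [lB] using hj)
  obtain ⟨i, s⟩ := z
  simp only at hz
  subst hz
  cases s
  · -- z = lA' : apply phia
    apply thin_phia (mem_alt_mk h1) (mem_alt_mk h2) (mem_alt_mk h3)
    rw [phiaF_mk, phiaF_mk, phiaF_mk]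
    have e1 : (invRev p ++ [lB] ++ (lA' :: q')).map mA
        = invRev (p.map mA) ++ [lB, lA] ++ q'.map mA := by
      simp only [List.map_append, mapA_invRev, List.map_cons]
      simp [mA, negP, lA, lA', lB]
    have e2 : (invRev (lA' :: q') ++ [lB] ++ r).map mA
        = invRev (q'.map mA) ++ [lA', lB] ++ r.map mA := by
      rw [_root_.invRev_cons, negP_A']
      simp only [List.map_append, mapA_invRev, List.map_cons]
      simp [mA, lA, lA', lB, negP]
    have e3 : (invRev r ++ [lB'] ++ p).map mA
        = invRev (r.map mA) ++ [lB'] ++ p.map mA := by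
      simp only [List.map_append, mapA_invRev]
      rfl
    rw [show ((0 : Fin 2), false) = lA' from rfl] at h1 h2 ⊢
    rw [e1, e2, e3]
    have h1' := altL_mapA h1
    have h2' := altL_mapA h2
    have h3' := altL_mapA h3
    rw [e1] at h1'
    rw [e2] at h2'
    rw [e3] at h3'
    exact coreB1 _ _ _ h1' h2' h3'
  · -- z = lA : direct T1b
    rw [show ((0 : Fin 2), true) = lA from rfl] at h1 h2 ⊢
    have e1 : invRev p ++ [lB] ++ (lA :: q') = invRev p ++ [lB, lA] ++ q' := by simp
    have e2 : invRev (lA :: q') ++ [lB] ++ r = invRev q' ++ [lA', lB] ++ r := by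
      rw [_root_.invRev_cons, negP_A]
      simp
    rw [e1] at h1 ⊢
    rw [e2] at h2 ⊢
    exact coreB1 _ _ _ h1 h2 h3

lemma coreA (p q r : List Λ)
    (h1 : AltL (invRev p ++ [lA] ++ q)) (h2 : AltL (invRev q ++ [lA] ++ r))
    (h3 : AltL (invRev r ++ [lA'] ++ p)) (hq : q ≠ []) :
    LetterThin (FreeGroup.mk (invRev p ++ [lA] ++ q))
      (FreeGroup.mk (invRev q ++ [lA] ++ r))
      (FreeGroup.mk (invRev r ++ [lA'] ++ p)) := by
  obtain ⟨z, q', rfl⟩ : ∃ z q', q = z :: q' := by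
    cases q with
    | nil => exact absurd rfl hq
    | cons z q' => exact ⟨z, q', rfl⟩
  have hz : z.1 = 1 := by
    have hj := (altL_append_iff.mp h1).2.2 lA
      (by rw [List.getLast?_concat]; rfl) z (by simp)
    rcases fin2 z.1 with h | h
    · exact absurd h.symm (by simpa [lA] using hj)
    · exact h
  obtain ⟨i, s⟩ := z
  simp only at hz
  subst hz
  cases s
  · -- z = lB' : apply phib
    apply thin_phib (mem_alt_mk h1) (mem_alt_mk h2) (mem_alt_mk h3)
    rw [phibF_mk, phibF_mk, phibF_mk]
    have e1 : (invRev p ++ [lA] ++ (lB' :: q')).map mB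
        = invRev (p.map mB) ++ [lA, lB] ++ q'.map mB := by
      simp only [List.map_append, mapB_invRev, List.map_cons]
      simp [mB, negP, lA, lB, lB']
    have e2 : (invRev (lB' :: q') ++ [lA] ++ r).map mB
        = invRev (q'.map mB) ++ [lB', lA] ++ r.map mB := by
      rw [_root_.invRev_cons, negP_B']
      simp only [List.map_append, mapB_invRev, List.map_cons]
      simp [mB, lA, lB, lB', negP]
    have e3 : (invRev r ++ [lA'] ++ p).map mB
        = invRev (r.map mB) ++ [lA'] ++ p.map mB := by
      simp only [List.map_append, mapB_invRev]
      rfl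
    rw [show ((1 : Fin 2), false) = lB' from rfl] at h1 h2 ⊢
    rw [e1, e2, e3]
    have h1' := altL_mapB h1
    have h2' := altL_mapB h2
    have h3' := altL_mapB h3
    rw [e1] at h1'
    rw [e2] at h2'
    rw [e3] at h3'
    exact coreA1 _ _ _ h1' h2' h3'
  · -- z = lB : direct T1a
    rw [show ((1 : Fin 2), true) = lB from rfl] at h1 h2 ⊢
    have e1 : invRev p ++ [lA] ++ (lB :: q') = invRev p ++ [lA, lB] ++ q' := by simp
    have e2 : invRev (lB :: q') ++ [lA] ++ r = invRev q' ++ [lB', lA] ++ r := by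
      rw [_root_.invRev_cons, negP_B]
      simp
    rw [e1] at h1 ⊢
    rw [e2] at h2 ⊢
    exact coreA1 _ _ _ h1 h2 h3

lemma mk_inv_triple (X Y : List Λ) (z : Λ) :
    (FreeGroup.mk (X ++ [z] ++ Y))⁻¹ = FreeGroup.mk (invRev Y ++ [negP z] ++ invRev X) := by
  rw [FreeGroup.inv_mk, invRev_triple]

lemma masterB (p q r : List Λ) (s₁ s₂ s₃ : Bool) (hs : ¬(s₁ = s₂ ∧ s₂ = s₃))
    (h1 : AltL (invRev p ++ [((1:Fin 2), s₁)] ++ q))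
    (h2 : AltL (invRev q ++ [((1:Fin 2), s₂)] ++ r))
    (h3 : AltL (invRev r ++ [((1:Fin 2), s₃)] ++ p))
    (hp : p ≠ []) (hq : q ≠ []) (hr : r ≠ []) :
    LetterThin (FreeGroup.mk (invRev p ++ [((1:Fin 2), s₁)] ++ q))
      (FreeGroup.mk (invRev q ++ [((1:Fin 2), s₂)] ++ r))
      (FreeGroup.mk (invRev r ++ [((1:Fin 2), s₃)] ++ p)) := by
  have eT : ((1:Fin 2), true) = lB := rfl
  have eF : ((1:Fin 2), false) = lB' := rfl
  cases s₁ <;> cases s₂ <;> cases s₃ <;>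
    simp only [eT, eF] at h1 h2 h3 ⊢
  · exact absurd ⟨rfl, rfl⟩ hs
  · -- (F,F,T)
    apply thin_sigma
    simp only [mk_inv_triple, FreeGroup.invRev_invRev, negP_B, negP_B']
    have h1' : AltL (invRev r ++ [lB] ++ q) := by
      have := altL_invRev h2
      rwa [invRev_triple, FreeGroup.invRev_invRev, negP_B'] at this
    have h2' : AltL (invRev q ++ [lB] ++ p) := by
      have := altL_invRev h1
      rwa [invRev_triple, FreeGroup.invRev_invRev, negP_B'] at this
    have h3' : AltL (invRev p ++ [lB'] ++ r) := by
      have := altL_invRev h3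
      rwa [invRev_triple, FreeGroup.invRev_invRev, negP_B] at this
    exact thin_rot (coreB r q p h1' h2' h3' hq)
  · -- (F,T,F)
    apply thin_sigma
    simp only [mk_inv_triple, FreeGroup.invRev_invRev, negP_B, negP_B']
    have h1' : AltL (invRev p ++ [lB] ++ r) := by
      have := altL_invRev h3
      rwa [invRev_triple, FreeGroup.invRev_invRev, negP_B'] at this
    have h2' : AltL (invRev r ++ [lB'] ++ q) := by
      have := altL_invRev h2
      rwa [invRev_triple, FreeGroup.invRev_invRev, negP_B] at this
    have h3' : AltL (invRev q ++ [lB] ++ p) := by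
      have := altL_invRev h1
      rwa [invRev_triple, FreeGroup.invRev_invRev, negP_B'] at this
    exact thin_rot (thin_rot (coreB q p r h3' h1' h2' hp))
  · -- (F,T,T)
    exact thin_rot (coreB q r p h2 h3 h1 hr)
  · -- (T,F,F)
    apply thin_sigma
    simp only [mk_inv_triple, FreeGroup.invRev_invRev, negP_B, negP_B']
    have h1' : AltL (invRev p ++ [lB] ++ r) := by
      have := altL_invRev h3
      rwa [invRev_triple, FreeGroup.invRev_invRev, negP_B'] at this
    have h2' : AltL (invRev r ++ [lB] ++ q) := by
      have := altL_invRev h2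
      rwa [invRev_triple, FreeGroup.invRev_invRev, negP_B'] at this
    have h3' : AltL (invRev q ++ [lB'] ++ p) := by
      have := altL_invRev h1
      rwa [invRev_triple, FreeGroup.invRev_invRev, negP_B] at this
    exact coreB p r q h1' h2' h3' hr
  · -- (T,F,T)
    exact thin_rot (thin_rot (coreB r p q h3 h1 h2 hp))
  · -- (T,T,F)
    exact coreB p q r h1 h2 h3 hq
  · exact absurd ⟨rfl, rfl⟩ hs

lemma masterA (p q r : List Λ) (s₁ s₂ s₃ : Bool) (hs : ¬(s₁ = s₂ ∧ s₂ = s₃))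
    (h1 : AltL (invRev p ++ [((0:Fin 2), s₁)] ++ q))
    (h2 : AltL (invRev q ++ [((0:Fin 2), s₂)] ++ r))
    (h3 : AltL (invRev r ++ [((0:Fin 2), s₃)] ++ p))
    (hp : p = [] → s₃ = false ∧ s₁ = true)
    (hq : q = [] → s₁ = false ∧ s₂ = true)
    (hr : r = [] → s₂ = false ∧ s₃ = true) :
    LetterThin (FreeGroup.mk (invRev p ++ [((0:Fin 2), s₁)] ++ q))
      (FreeGroup.mk (invRev q ++ [((0:Fin 2), s₂)] ++ r))
      (FreeGroup.mk (invRev r ++ [((0:Fin 2), s₃)] ++ p)) := by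
  have eT : ((0:Fin 2), true) = lA := rfl
  have eF : ((0:Fin 2), false) = lA' := rfl
  cases s₁ <;> cases s₂ <;> cases s₃ <;>
    simp only [eT, eF] at h1 h2 h3 ⊢
  · exact absurd ⟨rfl, rfl⟩ hs
  · -- (F,F,T)
    apply thin_sigma
    simp only [mk_inv_triple, FreeGroup.invRev_invRev, negP_A, negP_A']
    have h1' : AltL (invRev r ++ [lA] ++ q) := by
      have := altL_invRev h2
      rwa [invRev_triple, FreeGroup.invRev_invRev, negP_A'] at this
    have h2' : AltL (invRev q ++ [lA] ++ p) := by
      have := altL_invRev h1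
      rwa [invRev_triple, FreeGroup.invRev_invRev, negP_A'] at this
    have h3' : AltL (invRev p ++ [lA'] ++ r) := by
      have := altL_invRev h3
      rwa [invRev_triple, FreeGroup.invRev_invRev, negP_A] at this
    refine thin_rot (coreA r q p h1' h2' h3' ?_)
    intro hqe
    simpa using (hq hqe).2
  · -- (F,T,F)
    apply thin_sigma
    simp only [mk_inv_triple, FreeGroup.invRev_invRev, negP_A, negP_A']
    have h1' : AltL (invRev p ++ [lA] ++ r) := by
      have := altL_invRev h3
      rwa [invRev_triple, FreeGroup.invRev_invRev, negP_A'] at this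
    have h2' : AltL (invRev r ++ [lA'] ++ q) := by
      have := altL_invRev h2
      rwa [invRev_triple, FreeGroup.invRev_invRev, negP_A] at this
    have h3' : AltL (invRev q ++ [lA] ++ p) := by
      have := altL_invRev h1
      rwa [invRev_triple, FreeGroup.invRev_invRev, negP_A'] at this
    refine thin_rot (thin_rot (coreA q p r h3' h1' h2' ?_))
    intro hpe
    simpa using (hp hpe).2
  · -- (F,T,T)
    refine thin_rot (coreA q r p h2 h3 h1 ?_)
    intro hre
    simpa using (hr hre).1
  · -- (T,F,F)
    apply thin_sigma
    simp only [mk_inv_triple, FreeGroup.invRev_invRev, negP_A, negP_A']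
    have h1' : AltL (invRev p ++ [lA] ++ r) := by
      have := altL_invRev h3
      rwa [invRev_triple, FreeGroup.invRev_invRev, negP_A'] at this
    have h2' : AltL (invRev r ++ [lA] ++ q) := by
      have := altL_invRev h2
      rwa [invRev_triple, FreeGroup.invRev_invRev, negP_A'] at this
    have h3' : AltL (invRev q ++ [lA'] ++ p) := by
      have := altL_invRev h1
      rwa [invRev_triple, FreeGroup.invRev_invRev, negP_A] at this
    refine coreA p r q h1' h2' h3' ?_
    intro hre
    simpa using (hr hre).2
  · -- (T,F,T)
    refine thin_rot (thin_rot (coreA r p q h3 h1 h2 ?_))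
    intro hpe
    simpa using (hp hpe).1
  · -- (T,T,F)
    refine coreA p q r h1 h2 h3 ?_
    intro hqe
    simpa using (hq hqe).1
  · exact absurd ⟨rfl, rfl⟩ hs

lemma invRev_ne_nil {L : List Λ} (h : L ≠ []) : invRev L ≠ [] := by
  intro he
  apply h
  have := congrArg List.length he
  rw [FreeGroup.invRev_length] at this
  exact List.length_eq_zero_iff.mp this

lemma PlDl_both {lL lR : List Λ} (x : Λ) (hL : lL ≠ []) (hR : lR ≠ []) :
    Pl (Dl (invRev lL ++ [x] ++ lR)) = invRev (Dl lL) ++ [x] ++ Dl lR := by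
  rw [Dl_append _ hR, ← Pl_invRev hL]
  rw [show invRev lL ++ [x] ++ Dl lR = invRev lL ++ ([x] ++ Dl lR) by simp]
  rw [Pl_append _ (invRev_ne_nil hL)]
  simp

lemma PlDl_left0 {lR : List Λ} (s : Bool) (hR : lR ≠ []) :
    Pl (Dl (((0 : Fin 2), s) :: lR)) = lA :: Dl lR := by
  rw [Dl_cons _ hR]
  cases s
  · rw [pA', Pl_cons_A']
  · rw [pA, Pl_cons_A]

lemma PlDl_left1 {lR : List Λ} (s : Bool) (hR : lR ≠ []) :
    Pl (Dl (((1 : Fin 2), s) :: lR)) = lA :: ((1 : Fin 2), s) :: Dl lR := by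
  rw [Dl_cons _ hR, Pl_cons_B]

lemma PlDl_right0 {lL : List Λ} (s : Bool) (hL : lL ≠ []) :
    Pl (Dl (invRev lL ++ [((0 : Fin 2), s)])) = invRev (Dl lL) ++ [lA'] := by
  have h : Dl (invRev lL ++ [((0 : Fin 2), s)]) = invRev lL ++ [lA'] := by
    cases s
    · rw [pA', Dl_concat_A']
    · rw [pA, Dl_concat_A]
  rw [h, Pl_append _ (invRev_ne_nil hL), Pl_invRev hL]

lemma PlDl_right1 {lL : List Λ} (s : Bool) (hL : lL ≠ []) :
    Pl (Dl (invRev lL ++ [((1 : Fin 2), s)])) =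
      invRev (Dl lL) ++ [((1 : Fin 2), s), lA'] := by
  rw [Dl_concat_B, Pl_append _ (invRev_ne_nil hL), Pl_invRev hL]

lemma PlDl_single1 (s : Bool) :
    Pl (Dl [((1 : Fin 2), s)]) = [lA, ((1 : Fin 2), s), lA'] := by
  have : Dl [((1 : Fin 2), s)] = [((1 : Fin 2), s), lA'] := by
    simpa using Dl_concat_B [] s
  rw [this, Pl_cons_B]

def DD (l : List Λ) : List Λ := if l = [] then [lA'] else Dl l
def DD0 (l : List Λ) : List Λ := if l = [] then [] else Dl l

lemma DD_ne_nil (l : List Λ) : DD l ≠ [] := by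
  unfold DD
  split
  · simp
  · exact Dl_ne_nil (by assumption)

lemma DD0_eq_nil {l : List Λ} (h : DD0 l = []) : l = [] := by
  by_contra hc
  rw [show DD0 l = Dl l from if_neg hc] at h
  exact Dl_ne_nil hc h

lemma two_le_len {lL lR : List Λ} (x : Λ) (h : lL ≠ [] ∨ lR ≠ []) :
    2 ≤ (invRev lL ++ [x] ++ lR).length := by
  rcases h with h | h
  · have := List.length_pos_iff.mpr (invRev_ne_nil h)
    simp only [List.length_append, List.length_singleton]
    omega
  · have := List.length_pos_iff.mpr h
    simp only [List.length_append, List.length_singleton]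
    omega

lemma tilde_comp1 {x : W} {lL lR : List Λ} {s : Bool}
    (hx : x.toWord = invRev lL ++ [((1:Fin 2),s)] ++ lR) (hax : x ∈ Alt) :
    tildeW x = FreeGroup.mk (invRev (DD lL) ++ [((1:Fin 2),s)] ++ DD lR) ∧
      AltL (invRev (DD lL) ++ [((1:Fin 2),s)] ++ DD lR) := by
  have hA : AltL (invRev lL ++ [((1:Fin 2),s)] ++ lR) := by
    rw [← hx]; exact hax
  by_cases hL : lL = [] <;> by_cases hR : lR = []
  · subst hL; subst hR
    have hx' : x.toWord = [((1:Fin 2),s)] := by simpa using hx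
    have ht := tilde_mk hx' (Or.inr ⟨s, rfl⟩)
    rw [PlDl_single1] at ht
    have el : invRev (DD []) ++ [((1:Fin 2),s)] ++ DD ([] : List Λ)
        = [lA, ((1:Fin 2),s), lA'] := rfl
    rw [el]
    refine ⟨ht, ?_⟩
    unfold AltL
    cases s <;> simp [lA, lA', List.Chain']
  · subst hL
    have hx' : x.toWord = ((1:Fin 2),s) :: lR := by simpa using hx
    have ht := tilde_mk hx' (Or.inl (by
      rcases lR with _ | ⟨a, t⟩
      · exact absurd rfl hR
      · simp))
    rw [PlDl_left1 s hR] at ht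
    have hA' : AltL (((1:Fin 2),s) :: lR) := by simpa using hA
    have ha := altL_Pl (altL_Dl hA')
    rw [PlDl_left1 s hR] at ha
    have el : invRev (DD []) ++ [((1:Fin 2),s)] ++ DD lR
        = lA :: ((1:Fin 2),s) :: Dl lR := by
      rw [show DD ([] : List Λ) = [lA'] from rfl, show DD lR = Dl lR from if_neg hR]
      rfl
    rw [el]
    exact ⟨ht, ha⟩
  · subst hR
    have hx' : x.toWord = invRev lL ++ [((1:Fin 2),s)] := by simpa using hx
    have ht := tilde_mk hx' (Or.inl (by
      have := List.length_pos_iff.mpr (invRev_ne_nil hL)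
      simp only [List.length_append, List.length_singleton]
      omega))
    rw [PlDl_right1 s hL] at ht
    have hA' : AltL (invRev lL ++ [((1:Fin 2),s)]) := by simpa using hA
    have ha := altL_Pl (altL_Dl hA')
    rw [PlDl_right1 s hL] at ha
    have el : invRev (DD lL) ++ [((1:Fin 2),s)] ++ DD ([] : List Λ)
        = invRev (Dl lL) ++ [((1:Fin 2),s), lA'] := by
      rw [show DD ([] : List Λ) = [lA'] from rfl, show DD lL = Dl lL from if_neg hL]
      simp
    rw [el]
    exact ⟨ht, ha⟩
  · have ht := tilde_mk hx (Or.inl (two_le_len _ (Or.inl hL)))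
    rw [PlDl_both _ hL hR] at ht
    have ha := altL_Pl (altL_Dl hA)
    rw [PlDl_both _ hL hR] at ha
    have el : invRev (DD lL) ++ [((1:Fin 2),s)] ++ DD lR
        = invRev (Dl lL) ++ [((1:Fin 2),s)] ++ Dl lR := by
      rw [show DD lL = Dl lL from if_neg hL, show DD lR = Dl lR from if_neg hR]
    rw [el]
    exact ⟨ht, ha⟩

lemma tilde_comp0 {x : W} {lL lR : List Λ} {s : Bool}
    (hx : x.toWord = invRev lL ++ [((0:Fin 2),s)] ++ lR) (hax : x ∈ Alt)
    (hnn : ¬(lL = [] ∧ lR = [])) :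
    tildeW x = FreeGroup.mk (invRev (DD0 lL) ++
        [((0:Fin 2), if lL = [] then true else if lR = [] then false else s)] ++ DD0 lR) ∧
      AltL (invRev (DD0 lL) ++
        [((0:Fin 2), if lL = [] then true else if lR = [] then false else s)] ++ DD0 lR) := by
  have hA : AltL (invRev lL ++ [((0:Fin 2),s)] ++ lR) := by
    rw [← hx]; exact hax
  by_cases hL : lL = [] <;> by_cases hR : lR = []
  · exact absurd ⟨hL, hR⟩ hnn
  · subst hL
    have hsign : (if ([] : List Λ) = [] then true else if lR = [] then false else s) = true :=
      if_pos rfl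
    rw [hsign]
    have hx' : x.toWord = ((0:Fin 2),s) :: lR := by simpa using hx
    have ht := tilde_mk hx' (Or.inl (by
      rcases lR with _ | ⟨a, t⟩
      · exact absurd rfl hR
      · simp))
    rw [PlDl_left0 s hR] at ht
    have hA' : AltL (((0:Fin 2),s) :: lR) := by simpa using hA
    have ha := altL_Pl (altL_Dl hA')
    rw [PlDl_left0 s hR] at ha
    have el : invRev (DD0 []) ++ [((0:Fin 2), true)] ++ DD0 lR = lA :: Dl lR := by
      rw [show DD0 ([] : List Λ) = [] from rfl, show DD0 lR = Dl lR from if_neg hR]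
      rfl
    rw [el]
    exact ⟨ht, ha⟩
  · subst hR
    have hsign : (if lL = [] then true else if ([] : List Λ) = [] then false else s) = false := by
      rw [if_neg hL, if_pos rfl]
    rw [hsign]
    have hx' : x.toWord = invRev lL ++ [((0:Fin 2),s)] := by simpa using hx
    have ht := tilde_mk hx' (Or.inl (by
      have := List.length_pos_iff.mpr (invRev_ne_nil hL)
      simp only [List.length_append, List.length_singleton]
      omega))
    rw [PlDl_right0 s hL] at ht
    have hA' : AltL (invRev lL ++ [((0:Fin 2),s)]) := by simpa using hA
    have ha := altL_Pl (altL_Dl hA')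
    rw [PlDl_right0 s hL] at ha
    have el : invRev (DD0 lL) ++ [((0:Fin 2), false)] ++ DD0 ([] : List Λ)
        = invRev (Dl lL) ++ [lA'] := by
      rw [show DD0 ([] : List Λ) = [] from rfl, show DD0 lL = Dl lL from if_neg hL]
      simp [lA']
    rw [el]
    exact ⟨ht, ha⟩
  · have hsign : (if lL = [] then true else if lR = [] then false else s) = s := by
      rw [if_neg hL, if_neg hR]
    rw [hsign]
    have ht := tilde_mk hx (Or.inl (two_le_len _ (Or.inl hL)))
    rw [PlDl_both _ hL hR] at ht
    have ha := altL_Pl (altL_Dl hA)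
    rw [PlDl_both _ hL hR] at ha
    have el : invRev (DD0 lL) ++ [((0:Fin 2),s)] ++ DD0 lR
        = invRev (Dl lL) ++ [((0:Fin 2),s)] ++ Dl lR := by
      rw [show DD0 lL = Dl lL from if_neg hL, show DD0 lR = Dl lR from if_neg hR]
    rw [el]
    exact ⟨ht, ha⟩

lemma two_le_len_cons {l : List Λ} (x : Λ) (h : l ≠ []) : 2 ≤ (x :: l).length := by
  rcases l with _ | ⟨a, t⟩
  · exact absurd rfl h
  · simp

lemma two_le_len_concat {l : List Λ} (x : Λ) (h : l ≠ []) :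
    2 ≤ (invRev l ++ [x]).length := by
  have := List.length_pos_iff.mpr (invRev_ne_nil h)
  simp only [List.length_append, List.length_singleton]
  omega

lemma case2_abstract (u v w : W) (hu : u ∈ Alt) (hv : v ∈ Alt) (hw : w ∈ Alt)
    (i : Fin 2) (s₁ s₂ s₃ : Bool) (hs : ¬(s₁ = s₂ ∧ s₂ = s₃)) (l₁ l₂ l₃ : List Λ)
    (W1 : u.toWord = invRev l₁ ++ [(i, s₁)] ++ l₂)
    (W2 : v.toWord = invRev l₂ ++ [(i, s₂)] ++ l₃)
    (W3 : w.toWord = invRev l₃ ++ [(i, s₃)] ++ l₁) :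
    LetterThin (tildeW u) (tildeW v) (tildeW w) ∨
      Degenerate (tildeW u) (tildeW v) (tildeW w) := by
  rcases fin2 i with rfl | rfl
  · -- i = 0
    by_cases h12 : l₁ = [] ∧ l₂ = []
    · obtain ⟨e1, e2⟩ := h12
      subst e1; subst e2
      have t1 : tildeW u = 1 := by
        cases s₁
        · exact tildeW_of_A' (by simpa [invRev_nil, lA'] using W1)
        · exact tildeW_of_A (by simpa [invRev_nil, lA] using W1)
      by_cases h3 : l₃ = []
      · subst h3
        have t2 : tildeW v = 1 := by
          cases s₂
          · exact tildeW_of_A' (by simpa [invRev_nil, lA'] using W2)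
          · exact tildeW_of_A (by simpa [invRev_nil, lA] using W2)
        have t3 : tildeW w = 1 := by
          cases s₃
          · exact tildeW_of_A' (by simpa [invRev_nil, lA'] using W3)
          · exact tildeW_of_A (by simpa [invRev_nil, lA] using W3)
        rw [t1, t2, t3]
        right
        exact ⟨1, by rw [inv_one]; exact Relation.EqvGen.refl _⟩
      · right
        have ev : tildeW v = FreeGroup.mk (lA :: Dl l₃) := by
          have := tilde_mk (show v.toWord = ((0:Fin 2), s₂) :: l₃ by
            simpa [invRev_nil] using W2) (Or.inl (two_le_len_cons _ h3))
          rwa [PlDl_left0 s₂ h3] at this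
        have ew : tildeW w = FreeGroup.mk (invRev (Dl l₃) ++ [lA']) := by
          have := tilde_mk (show w.toWord = invRev l₃ ++ [((0:Fin 2), s₃)] by
            simpa using W3) (Or.inl (two_le_len_concat _ h3))
          rwa [PlDl_right0 s₃ h3] at this
        have hvw : tildeW w = (tildeW v)⁻¹ := by
          rw [ev, ew, FreeGroup.inv_mk, _root_.invRev_cons, negP_A]
        rw [t1]
        exact degen_rot (degen_pair' (tildeW v) (tildeW w) hvw)
    · by_cases h23 : l₂ = [] ∧ l₃ = []
      · obtain ⟨e2, e3⟩ := h23
        subst e2; subst e3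
        have h1 : l₁ ≠ [] := fun he => h12 ⟨he, rfl⟩
        have t2 : tildeW v = 1 := by
          cases s₂
          · exact tildeW_of_A' (by simpa [invRev_nil, lA'] using W2)
          · exact tildeW_of_A (by simpa [invRev_nil, lA] using W2)
        right
        have ew : tildeW w = FreeGroup.mk (lA :: Dl l₁) := by
          have := tilde_mk (show w.toWord = ((0:Fin 2), s₃) :: l₁ by
            simpa [invRev_nil] using W3) (Or.inl (two_le_len_cons _ h1))
          rwa [PlDl_left0 s₃ h1] at this
        have eu : tildeW u = FreeGroup.mk (invRev (Dl l₁) ++ [lA']) := by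
          have := tilde_mk (show u.toWord = invRev l₁ ++ [((0:Fin 2), s₁)] by
            simpa using W1) (Or.inl (two_le_len_concat _ h1))
          rwa [PlDl_right0 s₁ h1] at this
        have hwu : tildeW u = (tildeW w)⁻¹ := by
          rw [eu, ew, FreeGroup.inv_mk, _root_.invRev_cons, negP_A]
        rw [t2]
        exact degen_rot (degen_rot (degen_pair' (tildeW w) (tildeW u) hwu))
      · by_cases h31 : l₃ = [] ∧ l₁ = []
        · obtain ⟨e3, e1⟩ := h31
          subst e3; subst e1
          have h2 : l₂ ≠ [] := fun he => h12 ⟨rfl, he⟩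
          have t3 : tildeW w = 1 := by
            cases s₃
            · exact tildeW_of_A' (by simpa [invRev_nil, lA'] using W3)
            · exact tildeW_of_A (by simpa [invRev_nil, lA] using W3)
          right
          have eu : tildeW u = FreeGroup.mk (lA :: Dl l₂) := by
            have := tilde_mk (show u.toWord = ((0:Fin 2), s₁) :: l₂ by
              simpa [invRev_nil] using W1) (Or.inl (two_le_len_cons _ h2))
            rwa [PlDl_left0 s₁ h2] at this
          have ev : tildeW v = FreeGroup.mk (invRev (Dl l₂) ++ [lA']) := by
            have := tilde_mk (show v.toWord = invRev l₂ ++ [((0:Fin 2), s₂)] by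
              simpa using W2) (Or.inl (two_le_len_concat _ h2))
            rwa [PlDl_right0 s₂ h2] at this
          have huv : tildeW v = (tildeW u)⁻¹ := by
            rw [eu, ev, FreeGroup.inv_mk, _root_.invRev_cons, negP_A]
          rw [t3]
          exact degen_pair' (tildeW u) (tildeW v) huv
        · -- masterA route
          left
          obtain ⟨e1, A1⟩ := tilde_comp0 W1 hu h12
          obtain ⟨e2, A2⟩ := tilde_comp0 W2 hv h23
          obtain ⟨e3, A3⟩ := tilde_comp0 W3 hw h31
          rw [e1, e2, e3]
          apply masterA (DD0 l₁) (DD0 l₂) (DD0 l₃) _ _ _ ?_ A1 A2 A3 ?_ ?_ ?_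
          · -- signs not all equal
            by_cases hl1 : l₁ = [] <;> by_cases hl2 : l₂ = [] <;> by_cases hl3 : l₃ = []
            · exact absurd ⟨hl1, hl2⟩ h12
            · exact absurd ⟨hl1, hl2⟩ h12
            · exact absurd ⟨hl3, hl1⟩ h31
            · simp only [if_pos hl1, if_neg hl2, if_neg hl3]
              rintro ⟨ha, hb⟩
              simp at ha hb; rw [ha] at hb; exact Bool.false_ne_true hb.symm
            · exact absurd ⟨hl2, hl3⟩ h23
            · simp only [if_neg hl1, if_pos hl2, if_neg hl3]
              rintro ⟨ha, -⟩
              exact Bool.false_ne_true ha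
            · simp only [if_neg hl1, if_neg hl2, if_pos hl3]
              rintro ⟨ha, hb⟩
              exact Bool.false_ne_true hb
            · simp only [if_neg hl1, if_neg hl2, if_neg hl3]
              exact hs
          · intro hdd
            have hl1 := DD0_eq_nil hdd
            have hl3 : l₃ ≠ [] := fun he => h31 ⟨he, hl1⟩
            constructor
            · rw [if_neg hl3, if_pos hl1]
            · rw [if_pos hl1]
          · intro hdd
            have hl2 := DD0_eq_nil hdd
            have hl1 : l₁ ≠ [] := fun he => h12 ⟨he, hl2⟩
            constructor
            · rw [if_neg hl1, if_pos hl2]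
            · rw [if_pos hl2]
          · intro hdd
            have hl3 := DD0_eq_nil hdd
            have hl2 : l₂ ≠ [] := fun he => h23 ⟨he, hl3⟩
            constructor
            · rw [if_neg hl2, if_pos hl3]
            · rw [if_pos hl3]
  · -- i = 1
    left
    obtain ⟨e1, A1⟩ := tilde_comp1 W1 hu
    obtain ⟨e2, A2⟩ := tilde_comp1 W2 hv
    obtain ⟨e3, A3⟩ := tilde_comp1 W3 hw
    rw [e1, e2, e3]
    exact masterB (DD l₁) (DD l₂) (DD l₃) s₁ s₂ s₃ hs A1 A2 A3
      (DD_ne_nil _) (DD_ne_nil _) (DD_ne_nil _)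

def NC (a b : Λ) : Prop := ¬(a.1 = b.1 ∧ a.2 = !b.2)

lemma reduce_nc : ∀ {L : List Λ}, List.Chain' NC L → FreeGroup.reduce L = L := by
  intro L
  induction L with
  | nil => intro _; rfl
  | cons x xs ih =>
    intro h
    rw [FreeGroup.reduce.cons, ih h.tail]
    cases xs with
    | nil => rfl
    | cons y ys =>
      have hxy : NC x y := List.isChain_cons_cons.mp h |>.1
      simp only [List.casesOn]
      rw [if_neg hxy]

lemma altL_nc {L : List Λ} (h : AltL L) : List.Chain' NC L :=
  h.imp (fun a b hab => fun hc => hab hc.1)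

lemma degen_sigma {x₁ x₂ x₃ : W} (h : Degenerate x₃⁻¹ x₂⁻¹ x₁⁻¹) : Degenerate x₁ x₂ x₃ := by
  obtain ⟨t, ht⟩ := h
  exact ⟨t, Relation.EqvGen.trans _ _ _ (equiv_sigma x₁ x₂ x₃) ht⟩

lemma mul_decomp : ∀ (n : ℕ) (u v : W), v.toWord.length ≤ n → AltL u.toWord →
    AltL v.toWord →
    ∃ A B C : List Λ, u.toWord = A ++ invRev B ∧ v.toWord = B ++ C ∧
      (u * v).toWord = A ++ C := by
  intro n
  induction n with
  | zero =>
    intro u v hlen hu hv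
    have hv0 : v.toWord = [] := List.length_eq_zero_iff.mp (Nat.le_zero.mp hlen)
    have hv1 : v = 1 := FreeGroup.toWord_eq_nil_iff.mp hv0
    exact ⟨u.toWord, [], [], by simp [invRev_nil], by simp [hv0], by simp [hv1]⟩
  | succ n ih =>
    intro u v hlen hu hv
    cases hv' : v.toWord with
    | nil =>
      have hv1 : v = 1 := FreeGroup.toWord_eq_nil_iff.mp hv'
      exact ⟨u.toWord, [], [], by simp [invRev_nil], (List.nil_append _).symm,
        by simp [hv1, hv']⟩
    | cons y Y =>
      have hvY : AltL (y :: Y) := by rw [hv'] at hv; exact hv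
      have hvmk : v = FreeGroup.mk (y :: Y) := by rw [← hv', FreeGroup.mk_toWord]
      rcases List.eq_nil_or_concat u.toWord with hu' | ⟨U, x, hu'⟩
      · have hu1 : u = 1 := FreeGroup.toWord_eq_nil_iff.mp hu'
        exact ⟨[], [], y :: Y, by simp [hu', invRev_nil], (List.nil_append _).symm,
          by simp [hu1, hv']⟩
      · rw [List.concat_eq_append] at hu'
        by_cases hxy : x = negP y
        · subst hxy
          have hU : AltL U := by
            rw [hu'] at hu
            exact (altL_append_iff.mp hu).1
          have hY : AltL Y := hvY.tail
          have hu'w : (FreeGroup.mk U).toWord = U := toWord_mk_alt hU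
          have hv'w : (FreeGroup.mk Y).toWord = Y := toWord_mk_alt hY
          have key : u * v = FreeGroup.mk U * FreeGroup.mk Y := by
            have eu : u = FreeGroup.mk U * FreeGroup.mk [negP y] := by
              rw [FreeGroup.mul_mk, ← hu', FreeGroup.mk_toWord]
            have ev : v = FreeGroup.mk [y] * FreeGroup.mk Y := by
              rw [FreeGroup.mul_mk, hvmk]
              rfl
            have hcan : FreeGroup.mk [negP y] * FreeGroup.mk [y] = 1 := by
              rw [show FreeGroup.mk [negP y] = (FreeGroup.mk [y])⁻¹ from by
                rw [FreeGroup.inv_mk]; rfl]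
              exact inv_mul_cancel _
            rw [eu, ev, mul_assoc, ← mul_assoc (FreeGroup.mk [negP y]), hcan, one_mul]
          obtain ⟨A, B, C, e1, e2, e3⟩ := ih (FreeGroup.mk U) (FreeGroup.mk Y)
            (by
              rw [hv'w]
              rw [hv'] at hlen
              simpa using hlen)
            (by rw [hu'w]; exact hU) (by rw [hv'w]; exact hY)
          rw [hu'w] at e1
          rw [hv'w] at e2
          refine ⟨A, y :: B, C, ?_, ?_, ?_⟩
          · rw [hu', e1, _root_.invRev_cons]
            simp
          · rw [e2]
            rfl
          · rw [key, e3]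
        · refine ⟨u.toWord, [], y :: Y, by simp [invRev_nil], (List.nil_append _).symm, ?_⟩
          have emul : u * v = FreeGroup.mk (u.toWord ++ (y :: Y)) := by
            rw [← FreeGroup.mul_mk, FreeGroup.mk_toWord, ← hvmk]
          rw [emul, FreeGroup.toWord_mk, reduce_nc]
          apply List.isChain_append.mpr
          refine ⟨altL_nc hu, altL_nc hvY, ?_⟩
          intro a ha b hb
          rw [hu', List.getLast?_concat] at ha
          rw [List.head?_cons] at hb
          simp only [Option.mem_def, Option.some.injEq] at ha hb
          subst ha; subst hb
          rintro ⟨hfst, hsnd⟩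
          exact hxy (Prod.ext hfst hsnd)

lemma PlDl_genl1 (t : Bool) (C₂ : List Λ) :
    Pl (Dl (((1:Fin 2), t) :: C₂)) = lA :: Dl (((1:Fin 2), t) :: C₂) := by
  cases C₂ with
  | nil =>
    rw [show Dl [((1:Fin 2), t)] = [((1:Fin 2), t), lA'] from by simpa using Dl_concat_B [] t]
    rw [Pl_cons_B]
  | cons a T =>
    rw [Dl_cons _ (by simp), Pl_cons_B]

lemma tilde_scope_gen1 (t : Bool) (C₂ : List Λ) :
    2 ≤ (((1:Fin 2), t) :: C₂).length ∨ ∃ s : Bool, ((1:Fin 2), t) :: C₂ = [((1:Fin 2), s)] := by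
  cases C₂ with
  | nil => exact Or.inr ⟨t, rfl⟩
  | cons a T => exact Or.inl (by simp)

lemma case1_sub0 (u v w : W) (hu : u ∈ Alt) (hv : v ∈ Alt) (hw : w ∈ Alt)
    (B C : List Λ) (hBne : B ≠ []) (hCne : C ≠ [])
    (e1 : u.toWord = invRev B) (e2 : v.toWord = B ++ C) (e3 : w.toWord = invRev C)
    (hgC : ∃ t C₂, C = ((1:Fin 2), t) :: C₂) :
    LetterThin (tildeW u) (tildeW v) (tildeW w) ∨
      Degenerate (tildeW u) (tildeW v) (tildeW w) := by
  obtain ⟨t, C₂, rfl⟩ := hgC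
  cases hIB : invRev B with
  | nil => exact absurd hIB (invRev_ne_nil hBne)
  | cons z Z =>
    have hBeq : B = invRev Z ++ [negP z] := by
      rw [← FreeGroup.invRev_invRev (L₁ := B), hIB, _root_.invRev_cons]
    have e2' : v.toWord = invRev Z ++ [negP z] ++ (((1:Fin 2), t) :: C₂) := by
      rw [e2, hBeq]
    have hAv : AltL (invRev Z ++ [negP z] ++ (((1:Fin 2), t) :: C₂)) := by
      rw [← e2']; exact hv
    have hz0 : z.1 = 0 := by
      have hj := (altL_append_iff.mp hAv).2.2 (negP z)
        (by rw [List.getLast?_concat]; rfl) ((1:Fin 2), t) (by simp)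
      rcases fin2 z.1 with h | h
      · exact h
      · exact absurd (show (negP z).1 = ((1:Fin 2), t).1 from h) hj
    obtain ⟨zi, zs⟩ := z
    simp only at hz0
    subst hz0
    -- tilde of w
    have hw_inv_word : (w⁻¹).toWord = ((1:Fin 2), t) :: C₂ := by
      rw [FreeGroup.toWord_inv, e3, FreeGroup.invRev_invRev]
    have hAwC : AltL (((1:Fin 2), t) :: C₂) := by
      have := alt_inv hw
      rw [alt_iff, hw_inv_word] at this
      exact this
    have ewt : tildeW w⁻¹ = FreeGroup.mk (lA :: Dl (((1:Fin 2), t) :: C₂)) := by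
      rw [tilde_mk hw_inv_word (tilde_scope_gen1 t C₂), PlDl_genl1]
    have ew : tildeW w = (FreeGroup.mk (lA :: Dl (((1:Fin 2), t) :: C₂)))⁻¹ := by
      rw [← ewt, ← tilde_inv, inv_inv]
    have hAlaC : AltL (lA :: Dl (((1:Fin 2), t) :: C₂)) := by
      have := altL_Pl (altL_Dl hAwC)
      rwa [PlDl_genl1] at this
    by_cases hZ : Z = []
    · subst hZ
      have t1 : tildeW u = 1 := by
        cases zs
        · exact tildeW_of_A' (by rw [e1, hIB]; rfl)
        · exact tildeW_of_A (by rw [e1, hIB]; rfl)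
      have e2'' : v.toWord = ((0:Fin 2), !zs) :: (((1:Fin 2), t) :: C₂) := by
        rw [e2']; rfl
      have ev : tildeW v = FreeGroup.mk (lA :: Dl (((1:Fin 2), t) :: C₂)) := by
        rw [tilde_mk e2'' (Or.inl (two_le_len_cons _ (by simp))),
          PlDl_left0 (!zs) (by simp)]
      have evw : tildeW w = (tildeW v)⁻¹ := by rw [ev, ew]
      right
      rw [t1]
      exact degen_rot (degen_pair' _ _ evw)
    · left
      have e1' : u.toWord = ((0:Fin 2), zs) :: Z := by rw [e1, hIB]
      have hAu : AltL (((0:Fin 2), zs) :: Z) := by rw [← e1']; exact hu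
      have eu : tildeW u = FreeGroup.mk (lA :: Dl Z) := by
        rw [tilde_mk e1' (Or.inl (two_le_len_cons _ hZ)), PlDl_left0 zs hZ]
      have e2'' : v.toWord = invRev Z ++ [((0:Fin 2), !zs)] ++ (((1:Fin 2), t) :: C₂) := by
        rw [e2']; rfl
      have ev : tildeW v = FreeGroup.mk
          (invRev (Dl Z) ++ [((0:Fin 2), !zs)] ++ Dl (((1:Fin 2), t) :: C₂)) := by
        rw [tilde_mk e2'' (Or.inl (two_le_len _ (Or.inl hZ))), PlDl_both _ hZ (by simp)]
      have ew' : tildeW w = FreeGroup.mk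
          (invRev (Dl (((1:Fin 2), t) :: C₂)) ++ [lA']) := by
        rw [ew, FreeGroup.inv_mk, _root_.invRev_cons, negP_A]
      rw [eu, ev, ew']
      have A1 : AltL (lA :: Dl Z) := by
        have := altL_Pl (altL_Dl hAu)
        rwa [PlDl_left0 zs hZ] at this
      have A2 : AltL (invRev (Dl Z) ++ [((0:Fin 2), !zs)] ++ Dl (((1:Fin 2), t) :: C₂)) := by
        have hAv2 : AltL (invRev Z ++ [((0:Fin 2), !zs)] ++ (((1:Fin 2), t) :: C₂)) := by
          rw [← e2'']; exact hv
        have := altL_Pl (altL_Dl hAv2)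
        rwa [PlDl_both _ hZ (by simp)] at this
      have A3 : AltL (invRev (Dl (((1:Fin 2), t) :: C₂)) ++ [lA']) := by
        have := altL_invRev hAlaC
        rwa [_root_.invRev_cons, negP_A] at this
      have A3' : AltL (invRev (Dl (((1:Fin 2), t) :: C₂)) ++ [((0:Fin 2), false)] ++ []) := by
        simpa [lA'] using A3
      have hmA := masterA [] (Dl Z) (Dl (((1:Fin 2), t) :: C₂)) true (!zs) false
        (by rintro ⟨h1, h2⟩; rw [← h1] at h2; exact Bool.false_ne_true h2.symm)
        A1 A2 A3'
        (fun _ => ⟨rfl, rfl⟩)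
        (fun hq => absurd hq (Dl_ne_nil hZ))
        (fun hr => absurd hr (Dl_ne_nil (by simp)))
      simp only [List.append_nil] at hmA
      exact hmA

lemma case1_sub (u v w : W) (hu : u ∈ Alt) (hv : v ∈ Alt) (hw : w ∈ Alt)
    (B C : List Λ)
    (e1 : u.toWord = invRev B) (e2 : v.toWord = B ++ C) (e3 : w.toWord = invRev C) :
    LetterThin (tildeW u) (tildeW v) (tildeW w) ∨
      Degenerate (tildeW u) (tildeW v) (tildeW w) := by
  by_cases hB : B = []
  · subst hB
    have t1 : tildeW u = 1 := tildeW_of_nil (by rw [e1]; rfl)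
    have hv' : v.toWord = C := by simpa using e2
    have hvw : w = v⁻¹ := by
      rw [← FreeGroup.mk_toWord (x := w), e3, ← FreeGroup.mk_toWord (x := v), hv',
        FreeGroup.inv_mk]
    have hvw' : tildeW w = (tildeW v)⁻¹ := by rw [hvw, tilde_inv]
    right
    rw [t1]
    exact degen_rot (degen_pair' _ _ hvw')
  · by_cases hC : C = []
    · subst hC
      have t3 : tildeW w = 1 := tildeW_of_nil (by rw [e3]; rfl)
      have hv' : v.toWord = B := by simpa using e2
      have huv : v = u⁻¹ := by
        rw [← FreeGroup.mk_toWord (x := u), e1, ← FreeGroup.mk_toWord (x := v), hv',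
          FreeGroup.inv_mk, FreeGroup.invRev_invRev]
      have huv' : tildeW v = (tildeW u)⁻¹ := by rw [huv, tilde_inv]
      right
      rw [t3]
      exact degen_pair' _ _ huv'
    · rcases hCc : C with _ | ⟨⟨ci, ct⟩, C₂⟩
      · exact absurd hCc hC
      · subst hCc
        rcases fin2 ci with rfl | rfl
        · -- head C has generator 0 : apply sigma
          rcases List.eq_nil_or_concat B with hB' | ⟨B₀, b, hB'⟩
          · exact absurd hB' hB
          · rw [List.concat_eq_append] at hB'
            have hvA : AltL (B ++ ((0:Fin 2), ct) :: C₂) := by rw [← e2]; exact hv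
            have hb1 : b.1 = 1 := by
              have hj := (altL_append_iff.mp hvA).2.2 b
                (by rw [hB', List.getLast?_concat]; rfl) ((0:Fin 2), ct) (by simp)
              rcases fin2 b.1 with h | h
              · exact absurd (h.trans rfl) hj
              · exact h
            obtain ⟨bi, bs⟩ := b
            simp only at hb1
            subst hb1
            have f1 : (w⁻¹).toWord = invRev (invRev (((0:Fin 2), ct) :: C₂)) := by
              rw [FreeGroup.toWord_inv, e3]
            have f2 : (v⁻¹).toWord =
                invRev (((0:Fin 2), ct) :: C₂) ++ invRev B := by
              rw [FreeGroup.toWord_inv, e2, _root_.invRev_append]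
            have f3 : (u⁻¹).toWord = invRev (invRev B) := by
              rw [FreeGroup.toWord_inv, e1]
            have hgC' : ∃ t C₃, invRev B = ((1:Fin 2), t) :: C₃ := by
              refine ⟨!bs, invRev B₀, ?_⟩
              rw [hB', invRev_concat]
              rfl
            have hres := case1_sub0 w⁻¹ v⁻¹ u⁻¹ (alt_inv hw) (alt_inv hv) (alt_inv hu)
              (invRev (((0:Fin 2), ct) :: C₂)) (invRev B)
              (invRev_ne_nil hC) (invRev_ne_nil hB) f1 f2 f3 hgC'
            rcases hres with h | h
            · left
              rw [tilde_inv, tilde_inv, tilde_inv] at h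
              exact thin_sigma h
            · right
              rw [tilde_inv, tilde_inv, tilde_inv] at h
              exact degen_sigma h
        · exact case1_sub0 u v w hu hv hw B (((1:Fin 2), ct) :: C₂) hB hC e1 e2 e3
            ⟨ct, C₂, rfl⟩

lemma case1_abstract (u v w : W) (hu : u ∈ Alt) (hv : v ∈ Alt) (hw : w ∈ Alt)
    (hmul : u * v * w = 1) :
    LetterThin (tildeW u) (tildeW v) (tildeW w) ∨
      Degenerate (tildeW u) (tildeW v) (tildeW w) := by
  obtain ⟨A, B, C, e1, e2, e3⟩ := mul_decomp (v.toWord.length) u v le_rfl hu hv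
  have ew : w.toWord = invRev C ++ invRev A := by
    have hweq : w = (u * v)⁻¹ := (inv_eq_of_mul_eq_one_right hmul).symm
    rw [hweq, FreeGroup.toWord_inv, e3, _root_.invRev_append]
  by_cases hA : A = []
  · exact case1_sub u v w hu hv hw B C (by rw [e1, hA]; rfl) e2
      (by rw [ew, hA]; simp [invRev_nil])
  · by_cases hB : B = []
    · have r := case1_sub v w u hv hw hu (invRev C) (invRev A)
        (by rw [e2, hB, FreeGroup.invRev_invRev]; rfl) ew
        (by rw [e1, hB, FreeGroup.invRev_invRev]; simp [invRev_nil])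
      rcases r with h | h
      · exact Or.inl (thin_rot h)
      · exact Or.inr (degen_rot h)
    · by_cases hC : C = []
      · have r := case1_sub w u v hw hu hv A (invRev B)
          (by rw [ew, hC]; simp [invRev_nil]) (by rw [e1])
          (by rw [e2, hC, FreeGroup.invRev_invRev]; simp)
        rcases r with h | h
        · exact Or.inl (thin_rot (thin_rot h))
        · exact Or.inr (degen_rot (degen_rot h))
      · exfalso
        rcases List.eq_nil_or_concat A with h' | ⟨A₀, a', hA'⟩
        · exact absurd h' hA
        rcases List.eq_nil_or_concat B with h' | ⟨B₀, b, hB'⟩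
        · exact absurd h' hB
        rcases hC' : C with _ | ⟨c, C₂⟩
        · exact absurd hC' hC
        rw [List.concat_eq_append] at hA' hB'
        have hu' : AltL (A ++ invRev B) := by rw [← e1]; exact hu
        have hv' : AltL (B ++ C) := by rw [← e2]; exact hv
        have hw' : AltL (invRev C ++ invRev A) := by rw [← ew]; exact hw
        have h1 : a'.1 ≠ b.1 := by
          have hj := (altL_append_iff.mp hu').2.2 a'
            (by rw [hA', List.getLast?_concat]; rfl) (negP b)
            (by rw [hB', invRev_concat, List.head?_cons]; rfl)
          exact hj
        have h2 : b.1 ≠ c.1 := by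
          have hj := (altL_append_iff.mp hv').2.2 b
            (by rw [hB', List.getLast?_concat]; rfl) c
            (by rw [hC', List.head?_cons]; rfl)
          exact hj
        have h3 : c.1 ≠ a'.1 := by
          have hj := (altL_append_iff.mp hw').2.2 (negP c)
            (by rw [hC', _root_.invRev_cons, List.getLast?_concat]; rfl) (negP a')
            (by rw [hA', invRev_concat, List.head?_cons]; rfl)
          exact hj
        rcases fin2 a'.1 with ha | ha <;> rcases fin2 b.1 with hb | hb <;>
          rcases fin2 c.1 with hc | hc <;>
          first
            | exact h1 (ha.trans hb.symm)
            | exact h2 (hb.trans hc.symm)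
            | exact h3 (hc.trans ha.symm)

/-- **Proposition.** If `Φ : G → 𝒜` is a letter-quasimorphism, then the associated map
`Φ̃ = tildeW ∘ Φ` is a well-behaved letter-quasimorphism. -/
theorem tilde_wellBehaved {G : Type*} [Group G] (Φ : G → W) (hΦ : IsLetterQM Φ) :
    IsWellBehavedLQM (fun g => tildeW (Φ g)) := by
  obtain ⟨halt, hinv, hcase⟩ := hΦ
  refine ⟨fun g => tildeW_alt (halt g), fun g => ?_, fun g h => ?_⟩
  · show tildeW (Φ g⁻¹) = (tildeW (Φ g))⁻¹
    rw [hinv g, tilde_inv]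
  · show LetterThin (tildeW (Φ g)) (tildeW (Φ h)) ((tildeW (Φ (g * h)))⁻¹) ∨
      Degenerate (tildeW (Φ g)) (tildeW (Φ h)) ((tildeW (Φ (g * h)))⁻¹)
    rw [show (tildeW (Φ (g * h)))⁻¹ = tildeW ((Φ (g * h))⁻¹) from (tilde_inv _).symm]
    rcases hcase g h with hmul | ⟨i, s₁, s₂, s₃, c₁, c₂, c₃, a1, a2, a3, hs, W1, W2, W3⟩
    · exact case1_abstract _ _ _ (halt g) (halt h) (alt_inv (halt _)) hmul
    · refine case2_abstract _ _ _ (halt g) (halt h) (alt_inv (halt _)) i s₁ s₂ s₃ hs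
        c₁.toWord c₂.toWord c₃.toWord ?_ ?_ ?_
      · rw [W1, FreeGroup.toWord_inv]
      · rw [W2, FreeGroup.toWord_inv]
      · rw [W3, FreeGroup.toWord_inv]
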